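/- arXiv:1705.00278 — 2 statements merged into one kernel-verified Lean document; each statement's English description precedes it below -/
import Mathlib

section
/- Let 𝒟 ⊆ 𝒞 be subcategories of 𝓑 satisfying condition (RCP) and set ℋ_𝒟 := CoCone(𝒟,𝒞). If a morphism g : A → B with A, B ∈ ℋ_𝒟 factors through an object of 𝒟^⊥¹, then g factors through an object of 𝒟^⊥¹ ∩ ℋ_𝒟. -/
open CategoryTheory Category Limits ZeroObject

universe v u

namespace CotorsionPaper

variable {B : Type u} [Category.{v} B] [Abelian B]

/-- `f, g` form a short exact sequence `0 → X → Y → Z → 0`. -/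
def IsSES {X Y Z : B} (f : X ⟶ Y) (g : Y ⟶ Z) : Prop :=
  ∃ w : f ≫ g = 0, (ShortComplex.mk f g w).ShortExact

/-- `Ext¹(X, Y) = 0`: every short exact sequence `0 → Y → E → X → 0` splits. -/
def Ext1Zero (X Y : B) : Prop :=
  ∀ ⦃E : B⦄ (i : Y ⟶ E) (p : E ⟶ X), IsSES i p → ∃ s : X ⟶ E, s ≫ p = 𝟙 X

/-- `Ext²(X, Y) = 0`, via dimension shifting: `Ext¹(K, Y) = 0` for any syzygy `K` of `X`. -/
def Ext2Zero (X Y : B) : Prop :=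
  ∀ ⦃K P : B⦄ (i : K ⟶ P) (p : P ⟶ X), Projective P → IsSES i p → Ext1Zero K Y

/-- A (strictly) full additive subcategory: closed under isomorphisms,
contains a zero object and is closed under finite direct sums. -/
structure AddSubcat (S : Set B) : Prop where
  zero_mem : (0 : B) ∈ S
  iso_closed : ∀ ⦃X Y : B⦄, (X ≅ Y) → X ∈ S → Y ∈ S
  sum_closed : ∀ ⦃X Y : B⦄, X ∈ S → Y ∈ S → (X ⊞ Y) ∈ S

/-- `S` is closed under direct summands (retracts). -/
def ClosedUnderSummands (S : Set B) : Prop :=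
  ∀ ⦃X Y : B⦄ (r : X ⟶ Y) (s : Y ⟶ X), s ≫ r = 𝟙 Y → X ∈ S → Y ∈ S

/-- `S` is rigid: `Ext¹(X, Y) = 0` for all `X, Y ∈ S`. -/
def Rigid (S : Set B) : Prop :=
  ∀ ⦃X⦄, X ∈ S → ∀ ⦃Y⦄, Y ∈ S → Ext1Zero X Y

/-- `S^⊥¹`. -/
def rightPerp (S : Set B) : Set B := {Y | ∀ ⦃X⦄, X ∈ S → Ext1Zero X Y}

/-- `^⊥¹S`. -/
def leftPerp (S : Set B) : Set B := {X | ∀ ⦃Y⦄, Y ∈ S → Ext1Zero X Y}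

/-- `f : X ⟶ A` is a right `S`-approximation of `A`. -/
def IsRightApprox (S : Set B) {X A : B} (f : X ⟶ A) : Prop :=
  X ∈ S ∧ ∀ ⦃X' : B⦄, X' ∈ S → ∀ g : X' ⟶ A, ∃ h : X' ⟶ X, h ≫ f = g

def ContravariantlyFinite (S : Set B) : Prop :=
  ∀ A : B, ∃ (X : B) (f : X ⟶ A), IsRightApprox S f

/-- `f : A ⟶ X` is a left `S`-approximation of `A`. -/
def IsLeftApprox (S : Set B) {A X : B} (f : A ⟶ X) : Prop :=
  X ∈ S ∧ ∀ ⦃X' : B⦄, X' ∈ S → ∀ g : A ⟶ X', ∃ h : X ⟶ X', f ≫ h = g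

def CovariantlyFinite (S : Set B) : Prop :=
  ∀ A : B, ∃ (X : B) (f : A ⟶ X), IsLeftApprox S f

/-- `(U, V)` is a cotorsion pair. -/
structure CotorsionPair (U V : Set B) : Prop where
  summands_left : ClosedUnderSummands U
  summands_right : ClosedUnderSummands V
  ext : ∀ ⦃X⦄, X ∈ U → ∀ ⦃Y⦄, Y ∈ V → Ext1Zero X Y
  resol : ∀ X : B, ∃ (VX UX : B) (i : VX ⟶ UX) (p : UX ⟶ X),
    VX ∈ V ∧ UX ∈ U ∧ IsSES i p
  coresol : ∀ X : B, ∃ (VX UX : B) (i : X ⟶ VX) (p : VX ⟶ UX),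
    VX ∈ V ∧ UX ∈ U ∧ IsSES i p

/-- `CoCone(S, T)`. -/
def CoCone (S T : Set B) : Set B :=
  {X | ∃ (B' B'' : B) (i : X ⟶ B') (p : B' ⟶ B''), B' ∈ S ∧ B'' ∈ T ∧ IsSES i p}

/-- `Cone(S, T)`. -/
def Cone (S T : Set B) : Set B :=
  {X | ∃ (B' B'' : B) (i : B' ⟶ B'') (p : B'' ⟶ X), B' ∈ S ∧ B'' ∈ T ∧ IsSES i p}

/-- The subcategory `𝒫` of projective objects. -/
def projSet : Set B := {P | Projective P}

/-- The subcategory `ℐ` of injective objects. -/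
def injSet : Set B := {I | Injective I}

/-- `Ω𝒞`, the (first) syzygy of `𝒞`. -/
def Syz (C : Set B) : Set B := CoCone projSet C

/-- Condition (RCP): `𝒫 ⊆ 𝒞`, `𝒞` rigid, contravariantly finite,
closed under direct summands (and a full additive subcategory). -/
structure RCP (C : Set B) : Prop where
  add : AddSubcat C
  proj_mem : ∀ ⦃P : B⦄, Projective P → P ∈ C
  rigid : Rigid C
  contra : ContravariantlyFinite C
  summands : ClosedUnderSummands C

/-- `f` factors through an object of `S`. -/
def FactorsThru (S : Set B) {X Y : B} (f : X ⟶ Y) : Prop :=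
  ∃ (Z : B) (g : X ⟶ Z) (h : Z ⟶ Y), Z ∈ S ∧ g ≫ h = f

/-- The ideal of morphisms of the full subcategory on `H` factoring through an object of `S`. -/
def idealRel (H S : Set B) : HomRel (ObjectProperty.FullSubcategory (show ObjectProperty B from H)) :=
  fun X Y f g => FactorsThru S (show X.obj ⟶ Y.obj from f.hom - g.hom)

/-- The ideal quotient `H/S`. -/
abbrev HeartCat (H S : Set B) := CategoryTheory.Quotient (idealRel H S)

/-- The quotient functor `H → H/S`. -/
abbrev heartQ (H S : Set B) : ObjectProperty.FullSubcategory (show ObjectProperty B from H) ⥤ HeartCat H S :=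
  CategoryTheory.Quotient.functor _

/-- The zero morphism in the ideal quotient `H/S`. -/
def heartZero (H S : Set B) (X Y : HeartCat H S) : X ⟶ Y :=
  (heartQ H S).map (0 : X.as ⟶ Y.as)

/-- `κ` is a kernel of `φ` in the ideal quotient `H/S`. -/
structure IsKernelArrow {H S : Set B} {K X Y : HeartCat H S}
    (κ : K ⟶ X) (φ : X ⟶ Y) : Prop where
  w : κ ≫ φ = heartZero H S K Y
  lift : ∀ ⦃T : HeartCat H S⦄ (t : T ⟶ X), t ≫ φ = heartZero H S T Y →
    ∃! u : T ⟶ K, u ≫ κ = t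

/-- `π` is a cokernel of `φ` in the ideal quotient `H/S`. -/
structure IsCokernelArrow {H S : Set B} {X Y Q : HeartCat H S}
    (φ : X ⟶ Y) (π : Y ⟶ Q) : Prop where
  w : φ ≫ π = heartZero H S X Q
  desc : ∀ ⦃T : HeartCat H S⦄ (t : Y ⟶ T), φ ≫ t = heartZero H S X T →
    ∃! u : Q ⟶ T, π ≫ u = t

/-- The class of epimorphisms in `H/S` whose kernel object lies in `A`. -/
def epiClassWithKernelIn (H S A : Set B) : MorphismProperty (HeartCat H S) :=
  fun X Y φ => Epi φ ∧ ∃ (K : HeartCat H S) (κ : K ⟶ X),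
    K.as.obj ∈ A ∧ IsKernelArrow κ φ

/-- The class of monomorphisms in `H/S` whose cokernel object lies in `A`. -/
def monoClassWithCokernelIn (H S A : Set B) : MorphismProperty (HeartCat H S) :=
  fun X Y φ => Mono φ ∧ ∃ (Q : HeartCat H S) (π : Y ⟶ Q),
    Q.as.obj ∈ A ∧ IsCokernelArrow φ π

/-- The diagram `(⋄)` associated with a morphism `f : Y ⟶ X`. -/
structure DiamondDiagram {Y X : B} (f : Y ⟶ X) {OmX PX Z₁ IY SgY Z₂ : B}
    (q : OmX ⟶ PX) (p : PX ⟶ X) (j : OmX ⟶ Z₁) (g : Z₁ ⟶ Y)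
    (i : Y ⟶ IY) (c : IY ⟶ SgY) (h : X ⟶ Z₂) (e : Z₂ ⟶ SgY)
    (u : Z₁ ⟶ PX) (v : IY ⟶ Z₂) : Prop where
  projPX : Projective PX
  injIY : Injective IY
  ses_proj : IsSES q p
  ses_pullback : IsSES j g
  ses_inj : IsSES i c
  ses_pushout : IsSES h e
  comm₁ : j ≫ u = q
  comm₂ : u ≫ p = g ≫ f
  comm₃ : f ≫ h = i ≫ v
  comm₄ : v ≫ e = c

/-- The class of morphisms `f : Y ⟶ X` admitting a diagram `(⋄)` with
`Z₁ ∈ ZCond` and `h` factoring through an object of `HCond`. -/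
def Rclass (ZCond HCond : Set B) : MorphismProperty B :=
  fun Y X f => ∃ (OmX PX Z₁ IY SgY Z₂ : B) (q : OmX ⟶ PX) (p : PX ⟶ X)
    (j : OmX ⟶ Z₁) (g : Z₁ ⟶ Y) (i : Y ⟶ IY) (c : IY ⟶ SgY)
    (h : X ⟶ Z₂) (e : Z₂ ⟶ SgY) (u : Z₁ ⟶ PX) (v : IY ⟶ Z₂),
    DiamondDiagram f q p j g i c h e u v ∧ Z₁ ∈ ZCond ∧ FactorsThru HCond h

/-- The class of morphisms `f : Y ⟶ X` admitting a diagram `(⋄)` with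
`g` factoring through an object of `GCond` and `h` through an object of `HCond`. -/
def RtildeClass (GCond HCond : Set B) : MorphismProperty B :=
  fun Y X f => ∃ (OmX PX Z₁ IY SgY Z₂ : B) (q : OmX ⟶ PX) (p : PX ⟶ X)
    (j : OmX ⟶ Z₁) (g : Z₁ ⟶ Y) (i : Y ⟶ IY) (c : IY ⟶ SgY)
    (h : X ⟶ Z₂) (e : Z₂ ⟶ SgY) (u : Z₁ ⟶ PX) (v : IY ⟶ Z₂),
    DiamondDiagram f q p j g i c h e u v ∧ FactorsThru GCond g ∧ FactorsThru HCond h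

/-- The objects of the heart `ℋ` of a cotorsion pair `(U, V)`. -/
def HeartObjects (U V : Set B) : Set B :=
  {X | (∃ (VX UX : B) (i : VX ⟶ UX) (p : UX ⟶ X),
          IsSES i p ∧ VX ∈ V ∧ UX ∈ U ∩ V) ∧
       (∃ (VX UX : B) (i : X ⟶ VX) (p : VX ⟶ UX),
          IsSES i p ∧ VX ∈ U ∩ V ∧ UX ∈ U)}


section Statement6Aux

variable {B : Type u} [Category.{v} B] [Abelian B]

lemma IsSES.w' {X Y Z : B} {f : X ⟶ Y} {g : Y ⟶ Z} (h : IsSES f g) : f ≫ g = 0 := by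
  obtain ⟨w, _⟩ := h; exact w

lemma IsSES.monoF {X Y Z : B} {f : X ⟶ Y} {g : Y ⟶ Z} (h : IsSES f g) : Mono f := by
  obtain ⟨w, se⟩ := h; exact se.mono_f

lemma IsSES.epiG {X Y Z : B} {f : X ⟶ Y} {g : Y ⟶ Z} (h : IsSES f g) : Epi g := by
  obtain ⟨w, se⟩ := h; exact se.epi_g

lemma isSES_of_kernel_fork {X Y Z : B} {f : X ⟶ Y} {g : Y ⟶ Z} (w : f ≫ g = 0)
    (hepi : Epi g) (h : IsLimit (KernelFork.ofι f w)) : IsSES f g :=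
  ⟨w, { exact := (ShortComplex.mk f g w).exact_of_f_is_kernel h,
        mono_f := mono_of_isLimit_fork h, epi_g := hepi }⟩

lemma isSES_of_cokernel_cofork {X Y Z : B} {f : X ⟶ Y} {g : Y ⟶ Z} (w : f ≫ g = 0)
    (hmono : Mono f) (h : IsColimit (CokernelCofork.ofπ g w)) : IsSES f g :=
  ⟨w, { exact := (ShortComplex.mk f g w).exact_of_g_is_cokernel h,
        mono_f := hmono, epi_g := epi_of_isColimit_cofork h }⟩

/-- Factor a morphism killing `g` through the kernel `f` of the SES. -/
lemma IsSES.lift_of_comp_zero {X Y Z T : B} {f : X ⟶ Y} {g : Y ⟶ Z} (h : IsSES f g)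
    {t : T ⟶ Y} (ht : t ≫ g = 0) : ∃ l : T ⟶ X, l ≫ f = t := by
  obtain ⟨w, se⟩ := h
  obtain ⟨l, hl⟩ := KernelFork.IsLimit.lift' se.fIsKernel t ht
  exact ⟨l, hl⟩

/-- Factor a morphism killed by `f` through the cokernel `g` of the SES. -/
lemma IsSES.desc_of_zero_comp {X Y Z T : B} {f : X ⟶ Y} {g : Y ⟶ Z} (h : IsSES f g)
    {t : Y ⟶ T} (ht : f ≫ t = 0) : ∃ l : Z ⟶ T, g ≫ l = t := by
  obtain ⟨w, se⟩ := h
  obtain ⟨l, hl⟩ := CokernelCofork.IsColimit.desc' se.gIsCokernel t ht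
  exact ⟨l, hl⟩

/-- A section of the deflation yields a retraction of the inflation. -/
lemma retraction_of_section {Y N X : B} {i : Y ⟶ N} {π : N ⟶ X} (h : IsSES i π)
    {s : X ⟶ N} (hs : s ≫ π = 𝟙 X) : ∃ t : N ⟶ Y, i ≫ t = 𝟙 Y := by
  have hm : Mono i := h.monoF
  have hz : (𝟙 N - π ≫ s) ≫ π = 0 := by
    rw [Preadditive.sub_comp, id_comp, assoc, hs, comp_id, sub_self]
  obtain ⟨t, ht⟩ := h.lift_of_comp_zero hz
  refine ⟨t, ?_⟩
  rw [← cancel_mono i, assoc, ht, Preadditive.comp_sub, comp_id, ← assoc, h.w',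
    zero_comp, sub_zero, id_comp]

/-- Pushout of a short exact sequence along a morphism out of its first term. -/
lemma pushout_ses {K E Q Y : B} {κ : K ⟶ E} {ρ : E ⟶ Q} (h : IsSES κ ρ) (k : K ⟶ Y) :
    ∃ π : pushout κ k ⟶ Q, IsSES (pushout.inr κ k) π ∧ pushout.inl κ k ≫ π = ρ := by
  have hκ : Mono κ := h.monoF
  have hρ : Epi ρ := h.epiG
  have hw : κ ≫ ρ = k ≫ (0 : Y ⟶ Q) := by rw [h.w', comp_zero]
  refine ⟨pushout.desc ρ 0 hw, ?_, pushout.inl_desc _ _ _⟩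
  have hinl : pushout.inl κ k ≫ pushout.desc ρ 0 hw = ρ := pushout.inl_desc _ _ _
  have hinr0 : pushout.inr κ k ≫ pushout.desc ρ 0 hw = 0 := pushout.inr_desc _ _ _
  have hepi : Epi (pushout.desc ρ 0 hw) := by
    have : Epi (pushout.inl κ k ≫ pushout.desc ρ 0 hw) := by rw [hinl]; exact hρ
    exact epi_of_epi (pushout.inl κ k) _
  have hmono : Mono (pushout.inr κ k) := Abelian.mono_pushout_of_mono_f κ k
  refine isSES_of_cokernel_cofork hinr0 hmono ?_
  refine CokernelCofork.IsColimit.ofπ' _ hinr0 (fun {T} t ht => ?_)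
  have hκt : κ ≫ (pushout.inl κ k ≫ t) = 0 := by
    rw [← assoc, pushout.condition, assoc, ht, comp_zero]
  have hl := h.desc_of_zero_comp hκt
  refine ⟨hl.choose, ?_⟩
  apply pushout.hom_ext
  · rw [← assoc, hinl, hl.choose_spec]
  · rw [← assoc, hinr0, zero_comp, ht]

/-- Pullback of a short exact sequence (given by `d`, `e`) along `r`. -/
lemma pullback_ses_right {A X₂ X₃ Y : B} {d : A ⟶ X₂} {e : X₂ ⟶ X₃} (h : IsSES d e)
    (r : Y ⟶ X₃) :
    ∃ u : A ⟶ pullback e r, IsSES u (pullback.snd e r) ∧ u ≫ pullback.fst e r = d := by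
  have he : Epi e := h.epiG
  have hw : d ≫ e = (0 : A ⟶ Y) ≫ r := by rw [h.w', zero_comp]
  refine ⟨pullback.lift d 0 hw, ?_, pullback.lift_fst _ _ _⟩
  have hfst : pullback.lift d 0 hw ≫ pullback.fst e r = d := pullback.lift_fst _ _ _
  have hsnd : pullback.lift d 0 hw ≫ pullback.snd e r = 0 := pullback.lift_snd _ _ _
  have hepi : Epi (pullback.snd e r) := Abelian.epi_pullback_of_epi_f e r
  have hmono : Mono (pullback.lift d 0 hw) := by
    have : Mono (pullback.lift d 0 hw ≫ pullback.fst e r) := by rw [hfst]; exact h.monoF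
    exact mono_of_mono _ (pullback.fst e r)
  refine isSES_of_kernel_fork hsnd hepi ?_
  refine KernelFork.IsLimit.ofι' _ hsnd (fun {T} t ht => ?_)
  have hte : (t ≫ pullback.fst e r) ≫ e = 0 := by
    rw [assoc, pullback.condition, ← assoc, ht, zero_comp]
  have hl := h.lift_of_comp_zero hte
  refine ⟨hl.choose, ?_⟩
  apply pullback.hom_ext
  · rw [assoc, hfst, hl.choose_spec]
  · rw [assoc, hsnd, comp_zero, ht]

/-- Pullback of a short exact sequence (given by `k`, `r`) along `e`, other side. -/
lemma pullback_ses_left {K Y X₃ X₂ : B} {k : K ⟶ Y} {r : Y ⟶ X₃} (h : IsSES k r)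
    (e : X₂ ⟶ X₃) :
    ∃ u : K ⟶ pullback e r, IsSES u (pullback.fst e r) ∧ u ≫ pullback.snd e r = k := by
  have hr : Epi r := h.epiG
  have hw : (0 : K ⟶ X₂) ≫ e = k ≫ r := by rw [h.w', zero_comp]
  refine ⟨pullback.lift 0 k hw, ?_, pullback.lift_snd _ _ _⟩
  have hfst : pullback.lift 0 k hw ≫ pullback.fst e r = 0 := pullback.lift_fst _ _ _
  have hsnd : pullback.lift 0 k hw ≫ pullback.snd e r = k := pullback.lift_snd _ _ _
  have hepi : Epi (pullback.fst e r) := Abelian.epi_pullback_of_epi_g e r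
  have hmono : Mono (pullback.lift 0 k hw) := by
    have : Mono (pullback.lift 0 k hw ≫ pullback.snd e r) := by rw [hsnd]; exact h.monoF
    exact mono_of_mono _ (pullback.snd e r)
  refine isSES_of_kernel_fork hfst hepi ?_
  refine KernelFork.IsLimit.ofι' _ hfst (fun {T} t ht => ?_)
  have htr : (t ≫ pullback.snd e r) ≫ r = 0 := by
    rw [assoc, ← pullback.condition, ← assoc, ht, zero_comp]
  have hl := h.lift_of_comp_zero htr
  refine ⟨hl.choose, ?_⟩
  apply pullback.hom_ext
  · rw [assoc, hfst, comp_zero, ht]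
  · rw [assoc, hsnd, hl.choose_spec]

/-- The canonical SES `0 → pullback e r → X₂ ⊞ Y → X₃ → 0` when `e` is epi. -/
lemma pullback_biprod_ses {X₂ Y X₃ : B} (e : X₂ ⟶ X₃) (r : Y ⟶ X₃) (he : Epi e) :
    IsSES (biprod.lift (pullback.fst e r) (pullback.snd e r)) (biprod.desc e (-r)) := by
  have hw : biprod.lift (pullback.fst e r) (pullback.snd e r) ≫ biprod.desc e (-r) = 0 := by
    rw [biprod.lift_desc, Preadditive.comp_neg, pullback.condition, add_neg_cancel]
  have hepi : Epi (biprod.desc e (-r)) := by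
    have : Epi (biprod.inl ≫ biprod.desc e (-r)) := by rw [biprod.inl_desc]; exact he
    exact epi_of_epi biprod.inl _
  exact isSES_of_kernel_fork hw hepi
    (Abelian.PullbackToBiproductIsKernel.isLimitPullbackToBiproduct e r)

/-- Pushing out a mono `m` along the deflation `q` of a SES gives a SES
`0 → Y' → M → pushout m q → 0`. -/
lemma pushout_epi_ses {Y' Y Y'' M : B} {ι : Y' ⟶ Y} {q : Y ⟶ Y''} (h : IsSES ι q)
    (m : Y ⟶ M) (hm : Mono m) :
    IsSES (ι ≫ m) (pushout.inl m q : M ⟶ pushout m q) := by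
  have hq : Epi q := h.epiG
  have hι : Mono ι := h.monoF
  have hmono : Mono (ι ≫ m) := mono_comp _ _
  have hepi : Epi (pushout.inl m q : M ⟶ pushout m q) := pushout.inl_of_epi
  have hz : (ι ≫ m) ≫ pushout.inl m q = 0 := by
    rw [assoc, pushout.condition, ← assoc, h.w', zero_comp]
  refine isSES_of_cokernel_cofork hz hmono ?_
  refine CokernelCofork.IsColimit.ofπ' _ hz (fun {T} t ht => ?_)
  have hmt : ι ≫ (m ≫ t) = 0 := by rw [← assoc, ht]
  have hl := h.desc_of_zero_comp hmt
  exact ⟨pushout.desc t hl.choose hl.choose_spec.symm, pushout.inl_desc _ _ _⟩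

/-- Wakamatsu's lemma: the kernel of an epi right approximation by a rigid
subcategory lies in the right perpendicular category. -/
lemma wakamatsu {Dset : Set B} (hR : Rigid Dset) {K D' M : B} {k : K ⟶ D'} {r : D' ⟶ M}
    (hD' : D' ∈ Dset) (hses : IsSES k r)
    (happrox : ∀ ⦃X' : B⦄, X' ∈ Dset → ∀ g : X' ⟶ M, ∃ φ : X' ⟶ D', φ ≫ r = g) :
    K ∈ rightPerp Dset := by
  intro Db hDb E κ ρ hε
  obtain ⟨π, hπses, hinl⟩ := pushout_ses hε k
  obtain ⟨s, hs⟩ := hR hDb hD' (pushout.inr κ k) π hπses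
  obtain ⟨t, ht⟩ := retraction_of_section hπses hs
  set g := pushout.inl κ k ≫ t with hg
  have hκg : κ ≫ g = k := by
    rw [hg, ← assoc, pushout.condition, assoc, ht, comp_id]
  have h1 : κ ≫ (g ≫ r) = 0 := by rw [← assoc, hκg, hses.w']
  obtain ⟨f, hf⟩ := hε.desc_of_zero_comp h1
  obtain ⟨φ, hφ⟩ := happrox hDb f
  have h2 : (g - ρ ≫ φ) ≫ r = 0 := by
    rw [Preadditive.sub_comp, Category.assoc ρ φ r, hφ, hf, sub_self]
  obtain ⟨η, hη⟩ := hses.lift_of_comp_zero h2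
  have hκρ : κ ≫ ρ = 0 := hε.w'
  have hκη : κ ≫ η = 𝟙 K := by
    have hmk : Mono k := hses.monoF
    rw [← cancel_mono k, assoc, hη, Preadditive.comp_sub, hκg, ← assoc, hκρ,
      zero_comp, sub_zero, id_comp]
  have h3 : κ ≫ (𝟙 E - η ≫ κ) = 0 := by
    rw [Preadditive.comp_sub, comp_id, ← assoc, hκη, id_comp, sub_self]
  obtain ⟨σ, hσ⟩ := hε.desc_of_zero_comp h3
  refine ⟨σ, ?_⟩
  have hρ : Epi ρ := hε.epiG
  rw [← cancel_epi ρ, ← assoc, hσ, Preadditive.sub_comp, id_comp, assoc, hκρ,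
    comp_zero, sub_zero, comp_id]

/-- `Ext¹(X, -)`-vanishing is closed under extensions. -/
lemma ext1Zero_extension {X Y' Y Y'' : B} {ι : Y' ⟶ Y} {q : Y ⟶ Y''} (hY : IsSES ι q)
    (h' : Ext1Zero X Y') (h'' : Ext1Zero X Y'') : Ext1Zero X Y := by
  intro M m π hms
  obtain ⟨π', hπ'ses, hinl⟩ := pushout_ses hms q
  obtain ⟨s, hs⟩ := h'' (pushout.inr m q) π' hπ'ses
  have hE4 : IsSES (ι ≫ m) (pushout.inl m q : M ⟶ pushout m q) :=
    pushout_epi_ses hY m hms.monoF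
  obtain ⟨u, huses, hufst⟩ := pullback_ses_right hE4 s
  obtain ⟨σ, hσ⟩ := h' u (pullback.snd (pushout.inl m q) s) huses
  refine ⟨σ ≫ pullback.fst (pushout.inl m q) s, ?_⟩
  have : π = pushout.inl m q ≫ π' := hinl.symm
  rw [assoc, this, ← assoc (pullback.fst _ _), pullback.condition, assoc, hs, comp_id, hσ]

/-- A morphism out of the first term of a SES extends along the inflation provided
`Ext¹` of the cokernel vanishes against the target. -/
lemma extend_along_inflation {A Z Q W : B} {u : A ⟶ Z} {c : Z ⟶ Q} (h : IsSES u c)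
    (hext : Ext1Zero Q W) (a : A ⟶ W) : ∃ β : Z ⟶ W, u ≫ β = a := by
  obtain ⟨π, hπses, hinl⟩ := pushout_ses h a
  obtain ⟨s, hs⟩ := hext (pushout.inr u a) π hπses
  obtain ⟨t, ht⟩ := retraction_of_section hπses hs
  exact ⟨pushout.inl u a ≫ t, by rw [← assoc, pushout.condition, assoc, ht, comp_id]⟩

end Statement6Aux

/-- a morphism of `ℋ_𝒟` factoring through `𝒟^⊥¹` factors through
`𝒟^⊥¹ ∩ ℋ_𝒟`. -/
theorem statement_6 {B : Type u} [Category.{v} B] [Abelian B]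
    [EnoughProjectives B] [EnoughInjectives B]
    (C D : Set B) (hC : RCP C) (hD : RCP D) (hDC : D ⊆ C)
    {A X : B} (hA : A ∈ CoCone D C) (hX : X ∈ CoCone D C)
    (g : A ⟶ X) (h : FactorsThru (rightPerp D) g) :
    FactorsThru (rightPerp D ∩ CoCone D C) g := by
  obtain ⟨W, a, b, hW, hab⟩ := h
  obtain ⟨DA, CA, d, e, hDA, hCA, hsesA⟩ := hA
  -- an epi right `D`-approximation of `CA`
  obtain ⟨D₁, r₁, hD₁, happ₁⟩ := hD.contra CA
  set D' : B := D₁ ⊞ Projective.over CA with hD'def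
  have hD' : D' ∈ D := hD.add.sum_closed hD₁ (hD.proj_mem (Projective.projective_over CA))
  set r : D' ⟶ CA := biprod.desc r₁ (Projective.π CA) with hrdef
  have hrepi : Epi r := by
    have : Epi (biprod.inr ≫ r) := by
      rw [hrdef, biprod.inr_desc]; exact Projective.π_epi CA
    exact epi_of_epi biprod.inr r
  have happrox : ∀ ⦃X' : B⦄, X' ∈ D → ∀ g' : X' ⟶ CA, ∃ φ : X' ⟶ D', φ ≫ r = g' := by
    intro X' hX' g'
    obtain ⟨φ₁, hφ₁⟩ := happ₁ hX' g'
    exact ⟨φ₁ ≫ biprod.inl, by rw [assoc, hrdef, biprod.inl_desc, hφ₁]⟩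
  -- the kernel of the approximation
  have hKses : IsSES (kernel.ι r) r := by
    refine isSES_of_kernel_fork (kernel.condition r) hrepi ?_
    exact kernelIsKernel r
  have hKperp : kernel r ∈ rightPerp D := wakamatsu hD.rigid hD' hKses happrox
  -- the pullback `Z`
  have hee : Epi e := hsesA.epiG
  set Z : B := pullback e r with hZdef
  -- `Z ∈ CoCone D C`
  have hS1 : IsSES (biprod.lift (pullback.fst e r) (pullback.snd e r))
      (biprod.desc e (-r)) := pullback_biprod_ses e r hee
  have hZCoCone : Z ∈ CoCone D C :=
    ⟨DA ⊞ D', CA, biprod.lift (pullback.fst e r) (pullback.snd e r),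
      biprod.desc e (-r), hD.add.sum_closed hDA hD', hCA, hS1⟩
  -- `Z ∈ rightPerp D`
  obtain ⟨κ₂, hκ₂ses, _⟩ := pullback_ses_left hKses e
  have hZperp : Z ∈ rightPerp D := by
    intro X' hX'
    exact ext1Zero_extension hκ₂ses (hKperp hX') (hD.rigid hX' hDA)
  -- the inflation `u : A ⟶ Z` with cokernel `D'`
  obtain ⟨u, huses, _⟩ := pullback_ses_right hsesA r
  -- extend `a` along `u`
  obtain ⟨β, hβ⟩ := extend_along_inflation huses (hW hD') a
  exact ⟨Z, u, β ≫ b, ⟨hZperp, hZCoCone⟩, by rw [← assoc, hβ, hab]⟩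

end CotorsionPaper
end

section
/- Let 𝒟 ⊆ 𝒞 be subcategories of 𝓑 satisfying condition (RCP), ℋ := CoCone(𝒞,𝒞), and let ℋ/𝒞 be the heart of (𝒞,𝒞^⊥¹). If f̄ : Y → X is a monomorphism in the heart ℋ/𝒞 (X, Y ∈ ℋ) and X ∈ 𝒟^⊥¹, then Y ∈ 𝒟^⊥¹. -/
open CategoryTheory Category Limits ZeroObject

universe v u

namespace CotorsionPaper

variable {B : Type u} [Category.{v} B] [Abelian B]

section Aux

variable {B : Type u} [Category.{v} B] [Abelian B]

lemma extend_of_ext1Zero {Y E Z W : B} (i : Y ⟶ E) (p : E ⟶ Z) (hses : IsSES i p)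
    (hext : Ext1Zero Z W) (s : Y ⟶ W) : ∃ g : E ⟶ W, i ≫ g = s := by
  obtain ⟨w, hse⟩ := hses
  haveI : Mono i := hse.mono_f
  haveI : Epi p := hse.epi_g
  let inl : W ⟶ pushout s i := pushout.inl s i
  let inr : E ⟶ pushout s i := pushout.inr s i
  have hd0 : s ≫ (0 : W ⟶ Z) = i ≫ p := by rw [comp_zero, w]
  let d : pushout s i ⟶ Z := pushout.desc 0 p hd0
  have wd : inl ≫ d = 0 := pushout.inl_desc _ _ _
  have hr : inr ≫ d = p := pushout.inr_desc _ _ _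
  haveI : Epi d := epi_of_epi_fac hr
  have colim : IsColimit (CokernelCofork.ofπ d wd) := by
    refine CokernelCofork.IsColimit.ofπ' d wd (fun {A} k hk => ?_)
    have hik : i ≫ inr ≫ k = 0 := by
      rw [← assoc]
      show (i ≫ pushout.inr s i) ≫ k = 0
      rw [← pushout.condition, assoc, hk, comp_zero]
    refine ⟨hse.exact.desc (inr ≫ k) (by simpa using hik), ?_⟩
    apply pushout.hom_ext
    · simp only [← assoc]
      rw [pushout.inl_desc]
      simp only [zero_comp]; exact hk.symm
    · simp only [← assoc]
      rw [pushout.inr_desc]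
      exact hse.exact.g_desc (inr ≫ k) (by simpa using hik)
  have hSE : IsSES inl d := by
    refine ⟨wd, ShortComplex.ShortExact.mk' ?_ ?_ ?_⟩
    · exact ShortComplex.exact_of_g_is_cokernel _ colim
    · exact inferInstanceAs (Mono (pushout.inl s i))
    · exact inferInstanceAs (Epi d)
  obtain ⟨σ, hσ⟩ := hext inl d hSE
  obtain ⟨wd', hse'⟩ := hSE
  haveI : Mono inl := hse'.mono_f
  have hkill : (𝟙 (pushout s i) - d ≫ σ) ≫ d = 0 := by
    rw [Preadditive.sub_comp, id_comp, assoc, hσ, comp_id, sub_self]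
  obtain ⟨u, hu⟩ := hse'.exact.lift' (𝟙 _ - d ≫ σ) (by simpa using hkill)
  have hui : inl ≫ u = 𝟙 W := by
    have : (inl ≫ u) ≫ inl = 𝟙 W ≫ inl := by
      rw [assoc]
      change inl ≫ u ≫ (ShortComplex.mk inl d wd').f = _
      rw [hu, Preadditive.comp_sub, comp_id, ← assoc, wd, zero_comp, sub_zero, id_comp]
    exact (cancel_mono inl).1 this
  refine ⟨inr ≫ u, ?_⟩
  rw [← assoc, ← pushout.condition, assoc, hui, comp_id]

lemma congruence_idealRel {S : Set B} (hadd : AddSubcat S) (H : Set B) :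
    Congruence (idealRel H S) where
  equivalence := by
    intro X Y
    constructor
    · intro f
      exact ⟨0, 0, 0, hadd.zero_mem, by simp⟩
    · rintro f g ⟨Z, a, b, hZ, hab⟩
      replace hab : a ≫ b = f.hom - g.hom := hab
      refine ⟨Z, -a, b, hZ, ?_⟩
      show (-a) ≫ b = g.hom - f.hom
      rw [Preadditive.neg_comp, hab, neg_sub]
    · rintro f g h ⟨Z₁, a₁, b₁, hZ₁, hab₁⟩ ⟨Z₂, a₂, b₂, hZ₂, hab₂⟩
      replace hab₁ : a₁ ≫ b₁ = f.hom - g.hom := hab₁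
      replace hab₂ : a₂ ≫ b₂ = g.hom - h.hom := hab₂
      refine ⟨Z₁ ⊞ Z₂, biprod.lift a₁ a₂, biprod.desc b₁ b₂, hadd.sum_closed hZ₁ hZ₂, ?_⟩
      show biprod.lift a₁ a₂ ≫ biprod.desc b₁ b₂ = f.hom - h.hom
      rw [biprod.lift_desc, hab₁, hab₂, sub_add_sub_cancel]
  comp_left := by
    rintro X Y Z f g g' ⟨W, a, b, hW, hab⟩
    replace hab : a ≫ b = g.hom - g'.hom := hab
    have key : (((f.hom ≫ a) ≫ b) : X.obj ⟶ Z.obj) =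
        f.hom ≫ g.hom -
          f.hom ≫ g'.hom := by
      rw [assoc, hab, Preadditive.comp_sub]
    exact ⟨W, f.hom ≫ a, b, hW, key⟩
  comp_right := by
    rintro X Y Z f f' g ⟨W, a, b, hW, hab⟩
    replace hab : a ≫ b = f.hom - f'.hom := hab
    have key : ((a ≫ (b ≫ g.hom)) : X.obj ⟶ Z.obj) =
        f.hom ≫ g.hom -
          f'.hom ≫ g.hom := by
      rw [← assoc, hab, Preadditive.sub_comp]
    exact ⟨W, a, b ≫ g.hom, hW, key⟩

end Aux

/-- `𝒜` is closed under subobjects in the heart. -/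
theorem statement_9 {B : Type u} [Category.{v} B] [Abelian B]
    [EnoughProjectives B] [EnoughInjectives B]
    (C D : Set B) (hC : RCP C) (hD : RCP D) (hDC : D ⊆ C)
    {Y X : B} (hY : Y ∈ CoCone C C) (hX : X ∈ CoCone C C) (f : Y ⟶ X)
    (hmono : Mono ((heartQ (CoCone C C) C).map (X := ⟨Y, hY⟩) (Y := ⟨X, hX⟩) (ObjectProperty.homMk f)))
    (hXD : X ∈ rightPerp D) :
    Y ∈ rightPerp D := by
  intro Dl hDl E ii pp hsesE
  obtain ⟨wE, hseE⟩ := hsesE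
  haveI : Mono ii := hseE.mono_f
  haveI : Epi pp := hseE.epi_g
  have hDlC : Dl ∈ C := hDC hDl
  -- Step 1: extend f over E
  obtain ⟨g, hg⟩ := extend_of_ext1Zero ii pp ⟨wE, hseE⟩ (hXD hDl) f
  -- Step 2: projective presentation of Dl
  let P : B := Projective.over Dl
  let π : P ⟶ Dl := Projective.π Dl
  haveI : Projective P := inferInstanceAs (Projective (Projective.over Dl))
  let K : B := kernel π
  let q : K ⟶ P := kernel.ι π
  have hsesP : IsSES q π :=
    ⟨kernel.condition π, ShortComplex.ShortExact.mk'
      (CategoryTheory.ShortComplex.exact_kernel π) (inferInstanceAs (Mono (kernel.ι π))) inferInstance⟩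
  obtain ⟨wP, hseP⟩ := hsesP
  let l : P ⟶ E := Projective.factorThru π pp
  have hl : l ≫ pp = π := Projective.factorThru_comp π pp
  have hql : (q ≫ l) ≫ pp = 0 := by rw [assoc, hl]; exact kernel.condition π
  obtain ⟨φ, hφ⟩ := hseE.exact.lift' (q ≫ l) (by simpa using hql)
  have hφ : φ ≫ ii = q ≫ l := hφ
  have hK : K ∈ CoCone C C :=
    ⟨P, Dl, q, π, hC.proj_mem ‹Projective P›, hDlC, wP, hseP⟩
  -- Step 3: φ ≫ f factors through P ∈ C
  have hfac : FactorsThru C (φ ≫ f) := by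
    refine ⟨P, q, l ≫ g, hC.proj_mem ‹Projective P›, ?_⟩
    rw [← assoc, ← hφ, assoc, hg]
  -- Step 4: in the heart, φ factors through C
  haveI : Congruence (idealRel (CoCone C C) C) := congruence_idealRel hC.add _
  let Ko : ObjectProperty.FullSubcategory (show ObjectProperty B from CoCone C C) := ⟨K, hK⟩
  let Yo : ObjectProperty.FullSubcategory (show ObjectProperty B from CoCone C C) := ⟨Y, hY⟩
  let Xo : ObjectProperty.FullSubcategory (show ObjectProperty B from CoCone C C) := ⟨X, hX⟩
  let φ' : Ko ⟶ Yo := ObjectProperty.homMk φ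
  let fm : Yo ⟶ Xo := (heartQ (CoCone C C) C).map (X := ⟨Y, hY⟩) (Y := ⟨X, hX⟩) (ObjectProperty.homMk f) |> fun _ => ObjectProperty.homMk f
  have h1 : (heartQ (CoCone C C) C).map (φ' ≫ fm) =
      (heartQ (CoCone C C) C).map ((0 : Ko ⟶ Yo) ≫ fm) := by
    rw [Quotient.functor_map_eq_iff]
    have : FactorsThru C (φ ≫ f - (0 : K ⟶ Y) ≫ f) := by
      rw [zero_comp, sub_zero]; exact hfac
    exact this
  haveI hm : Mono ((heartQ (CoCone C C) C).map (X := ⟨Y, hY⟩) (Y := ⟨X, hX⟩) (ObjectProperty.homMk f)) := hmono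
  have h2 : (heartQ (CoCone C C) C).map φ' = (heartQ (CoCone C C) C).map (0 : Ko ⟶ Yo) := by
    have hmm : Mono ((heartQ (CoCone C C) C).map fm) := hm
    rw [← cancel_mono ((heartQ (CoCone C C) C).map fm), ← Functor.map_comp, ← Functor.map_comp]
    exact h1
  have hφfac : FactorsThru C φ := by
    have h3 := (Quotient.functor_map_eq_iff (idealRel (CoCone C C) C) _ _).1 h2
    obtain ⟨Z, a, b, hZ, hab⟩ := h3
    replace hab : a ≫ b = φ - (0 : K ⟶ Y) := hab
    exact ⟨Z, a, b, hZ, by rw [hab, sub_zero]⟩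
  obtain ⟨C₀, sφ, tφ, hC₀, hst⟩ := hφfac
  -- Step 5: extend sφ over P using rigidity
  obtain ⟨a, ha⟩ := extend_of_ext1Zero q π ⟨wP, hseP⟩ (hC.rigid hDlC hC₀) sφ
  have hkill : q ≫ (l - (a ≫ tφ) ≫ ii) = 0 := by
    rw [Preadditive.comp_sub, ← hφ, ← assoc, ← assoc, ha, hst, sub_self]
  obtain ⟨σ, hσ⟩ := hseP.exact.desc' (l - (a ≫ tφ) ≫ ii) (by simpa using hkill)
  have hσ : π ≫ σ = l - (a ≫ tφ) ≫ ii := hσ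
  refine ⟨σ, ?_⟩
  haveI : Epi π := inferInstance
  rw [← cancel_epi π, ← assoc, hσ, Preadditive.sub_comp, hl, assoc, assoc, wE,
    comp_zero, comp_zero, sub_zero, comp_id]


end CotorsionPaper
end
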